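/- Let k∈ℝ with |k|>1. If ψ:ℝ→ℂ is 2π-periodic and C², and satisfies (cos y − 1)·(ψ''(y) − k²ψ(y)) + cos(y)·ψ(y) = 0 for all y∈ℝ, then ψ≡0. (In other words, λ=1 is not an embedded eigenvalue of the linearized Euler operator around the Kolmogorov flow b(y)=cos y: the equation (b−λ)(∂_y²−k²)ψ−b''ψ=0 with λ=1 has no nontrivial periodic solution.) -/

import Mathlib

open Real

/-- At a local max of a C² real function, the second derivative is nonpositive. -/
lemma stmt5_aux_deriv2 {f : ℝ → ℝ} (hf : ContDiff ℝ 2 f) {a : ℝ} (h : IsLocalMax f a) :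
    deriv (deriv f) a ≤ 0 := by
  by_contra hpos
  push_neg at hpos
  have hf2 : ContDiff ℝ (1 + 1) f := by norm_num; exact hf
  have hf1 : ContDiff ℝ 1 (deriv f) := (contDiff_succ_iff_deriv.mp hf2).2.2
  have hdf : Differentiable ℝ (deriv f) := (contDiff_one_iff_deriv.mp hf1).1
  have hcont : Continuous (deriv (deriv f)) := (contDiff_one_iff_deriv.mp hf1).2
  have hderiv0 : deriv f a = 0 := h.deriv_eq_zero
  have hev1 : ∀ᶠ x in nhds a, 0 < deriv (deriv f) x :=
    (hcont.continuousAt (x := a)).eventually (eventually_gt_nhds hpos)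
  have hev : ∀ᶠ x in nhds a, 0 < deriv (deriv f) x ∧ f x ≤ f a := hev1.and h
  obtain ⟨δ, hδ, hball⟩ := Metric.eventually_nhds_iff_ball.mp hev
  have hsub : Set.Ioo (a - δ) (a + δ) ⊆ Metric.ball a δ := by
    intro x hx
    rw [Metric.mem_ball, Real.dist_eq, abs_lt]
    constructor <;> [linarith [hx.1]; linarith [hx.2]]
  -- deriv f is strictly monotone on Ioo (a-δ) (a+δ)
  have hmono : StrictMonoOn (deriv f) (Set.Ioo (a - δ) (a + δ)) := by
    apply strictMonoOn_of_deriv_pos (convex_Ioo _ _) (hdf.continuous.continuousOn)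
    intro x hx
    rw [interior_Ioo] at hx
    exact (hball x (hsub hx)).1
  -- so deriv f > 0 on (a, a+δ)
  have hdpos : ∀ x ∈ Set.Ioo a (a + δ), 0 < deriv f x := by
    intro x hx
    have ha : a ∈ Set.Ioo (a - δ) (a + δ) := by constructor <;> linarith
    have hx' : x ∈ Set.Ioo (a - δ) (a + δ) := by constructor <;> [linarith [hx.1]; linarith [hx.2]]
    have := hmono ha hx' hx.1
    rwa [hderiv0] at this
  -- so f is strictly monotone on [a, a+δ)
  have hfmono : StrictMonoOn f (Set.Ico a (a + δ)) := by
    apply strictMonoOn_of_deriv_pos (convex_Ico _ _)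
      (hf.continuous.continuousOn)
    intro x hx
    rw [interior_Ico] at hx
    exact hdpos x hx
  have h1 : a ∈ Set.Ico a (a + δ) := ⟨le_refl _, by linarith⟩
  have h2 : a + δ / 2 ∈ Set.Ico a (a + δ) := ⟨by linarith, by linarith⟩
  have h3 : f a < f (a + δ / 2) := hfmono h1 h2 (by linarith)
  have h4 : f (a + δ / 2) ≤ f a := by
    have : a + δ / 2 ∈ Metric.ball a δ := hsub ⟨by linarith, by linarith⟩
    exact (hball _ this).2
  linarith

/-- Key real lemma: a C², 2π-periodic real solution of the ODE is nonpositive. -/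
lemma stmt5_aux_real {k : ℝ} (hk : 1 < |k|) {f : ℝ → ℝ} (hf : ContDiff ℝ 2 f)
    (hper : Function.Periodic f (2 * π))
    (heq : ∀ y : ℝ, (Real.cos y - 1) * (deriv (deriv f) y - k ^ 2 * f y)
        + Real.cos y * f y = 0) :
    ∀ y : ℝ, f y ≤ 0 := by
  have hk2 : 1 < k ^ 2 := by
    have := sq_abs k
    nlinarith
  have h2pi : (0 : ℝ) < 2 * π := by positivity
  obtain ⟨y₀, hy₀mem, hy₀max⟩ := (isCompact_Icc (a := (0:ℝ)) (b := 2 * π)).exists_isMaxOn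
    (Set.nonempty_Icc.mpr (by positivity)) (hf.continuous.continuousOn)
  have hglob : ∀ y : ℝ, f y ≤ f y₀ := by
    intro y
    obtain ⟨z, hz, hzeq⟩ := hper.exists_mem_Ico₀ h2pi y
    rw [hzeq]
    exact hy₀max ⟨hz.1, le_of_lt hz.2⟩
  intro y
  rcases le_or_gt (f y₀) 0 with hle | hgt
  · exact le_trans (hglob y) hle
  · exfalso
    rcases eq_or_lt_of_le (Real.cos_le_one y₀) with hc1 | hc1
    · -- cos y₀ = 1, then f y₀ = 0 from the equation
      have := heq y₀
      rw [hc1] at this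
      simp at this
      linarith
    · -- cos y₀ < 1: second derivative positive at a max, contradiction
      have hmax : IsLocalMax f y₀ := Filter.Eventually.of_forall hglob
      have hD : deriv (deriv f) y₀ ≤ 0 := stmt5_aux_deriv2 hf hmax
      have hE := heq y₀
      have hcb : -1 ≤ Real.cos y₀ := Real.neg_one_le_cos y₀
      nlinarith [mul_pos (sub_pos.mpr hc1) hgt, mul_nonneg (le_of_lt (sub_pos.mpr hc1)) (neg_nonneg.mpr hD)]

theorem stmt5 (k : ℝ) (hk : 1 < |k|) (ψ : ℝ → ℂ) (hψ : ContDiff ℝ 2 ψ)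
    (hper : Function.Periodic ψ (2 * π))
    (heq : ∀ y : ℝ,
      ((Real.cos y : ℂ) - 1) * (deriv (deriv ψ) y - (k : ℂ) ^ 2 * ψ y)
        + (Real.cos y : ℂ) * ψ y = 0) :
    ∀ y : ℝ, ψ y = 0 := by
  have hψ2 : ContDiff ℝ (1 + 1) ψ := by norm_num; exact hψ
  have hψd : Differentiable ℝ ψ := (contDiff_succ_iff_deriv.mp hψ2).1
  have hψ1 : ContDiff ℝ 1 (deriv ψ) := (contDiff_succ_iff_deriv.mp hψ2).2.2
  have hψd' : Differentiable ℝ (deriv ψ) := (contDiff_one_iff_deriv.mp hψ1).1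
  -- real part and imaginary part as real functions
  have hre : ∀ (L : ℂ →L[ℝ] ℝ),
      (∀ y, deriv (deriv (fun x => L (ψ x))) y = L (deriv (deriv ψ) y)) := by
    intro L
    have hd1 : deriv (fun x => L (ψ x)) = fun y => L (deriv ψ y) := by
      funext y
      exact (L.hasFDerivAt.comp_hasDerivAt y (hψd y).hasDerivAt).deriv
    intro y
    rw [hd1]
    exact (L.hasFDerivAt.comp_hasDerivAt y (hψd' y).hasDerivAt).deriv
  have hcd : ∀ (L : ℂ →L[ℝ] ℝ), ContDiff ℝ 2 (fun x => L (ψ x)) :=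
    fun L => L.contDiff.comp hψ
  have hperL : ∀ (L : ℂ →L[ℝ] ℝ), Function.Periodic (fun x => L (ψ x)) (2 * π) :=
    fun L x => by simp [hper x]
  -- the real equations
  have heqre : ∀ y : ℝ, (Real.cos y - 1) *
      (deriv (deriv (fun x => (ψ x).re)) y - k ^ 2 * (ψ y).re)
        + Real.cos y * (ψ y).re = 0 := by
    intro y
    have h1 := congrArg Complex.re (heq y)
    have h2 := hre Complex.reCLM y
    simp only [Complex.reCLM_apply] at h2
    simp only [Complex.add_re, Complex.mul_re, Complex.sub_re, Complex.sub_im,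
      Complex.ofReal_re, Complex.ofReal_im, Complex.one_re, Complex.one_im,
      Complex.mul_im, Complex.zero_re] at h1
    rw [h2]
    have hk2re : ((k : ℂ) ^ 2).re = k ^ 2 := by
      rw [show ((k : ℂ) ^ 2) = ((k ^ 2 : ℝ) : ℂ) by push_cast; ring]
      exact Complex.ofReal_re _
    have hk2im : ((k : ℂ) ^ 2).im = 0 := by
      rw [show ((k : ℂ) ^ 2) = ((k ^ 2 : ℝ) : ℂ) by push_cast; ring]
      exact Complex.ofReal_im _
    rw [hk2re, hk2im] at h1
    ring_nf at h1 ⊢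
    linarith
  have heqim : ∀ y : ℝ, (Real.cos y - 1) *
      (deriv (deriv (fun x => (ψ x).im)) y - k ^ 2 * (ψ y).im)
        + Real.cos y * (ψ y).im = 0 := by
    intro y
    have h1 := congrArg Complex.im (heq y)
    have h2 := hre Complex.imCLM y
    simp only [Complex.imCLM_apply] at h2
    simp only [Complex.add_im, Complex.mul_re, Complex.sub_re, Complex.sub_im,
      Complex.ofReal_re, Complex.ofReal_im, Complex.one_re, Complex.one_im,
      Complex.mul_im, Complex.zero_im] at h1
    rw [h2]
    have hk2re : ((k : ℂ) ^ 2).re = k ^ 2 := by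
      rw [show ((k : ℂ) ^ 2) = ((k ^ 2 : ℝ) : ℂ) by push_cast; ring]
      exact Complex.ofReal_re _
    have hk2im : ((k : ℂ) ^ 2).im = 0 := by
      rw [show ((k : ℂ) ^ 2) = ((k ^ 2 : ℝ) : ℂ) by push_cast; ring]
      exact Complex.ofReal_im _
    rw [hk2re, hk2im] at h1
    ring_nf at h1 ⊢
    linarith
  -- a helper: if g satisfies the hypotheses then g ≡ 0
  have main : ∀ g : ℝ → ℝ, ContDiff ℝ 2 g → Function.Periodic g (2 * π) →
      (∀ y : ℝ, (Real.cos y - 1) * (deriv (deriv g) y - k ^ 2 * g y)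
        + Real.cos y * g y = 0) → ∀ y, g y = 0 := by
    intro g hg hgper hgeq y
    have h1 : g y ≤ 0 := stmt5_aux_real hk hg hgper hgeq y
    have hnegeq : ∀ y : ℝ, (Real.cos y - 1) * (deriv (deriv (fun x => -g x)) y
        - k ^ 2 * (fun x => -g x) y) + Real.cos y * (fun x => -g x) y = 0 := by
      intro z
      have hd : deriv (deriv (fun x => -g x)) z = -deriv (deriv g) z := by
        have h1 : (deriv fun x => -g x) = fun x => -deriv g x := deriv.neg'
        rw [h1, deriv.fun_neg]
      rw [hd]
      have := hgeq z
      simp only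
      ring_nf
      ring_nf at this
      linarith
    have h2 : -g y ≤ 0 := stmt5_aux_real hk hg.neg (fun x => by simp [hgper x]) hnegeq y
    linarith
  intro y
  have hre0 := main (fun x => (ψ x).re) (hcd Complex.reCLM) (hperL Complex.reCLM) heqre y
  have him0 := main (fun x => (ψ x).im) (hcd Complex.imCLM) (hperL Complex.imCLM) heqim y
  exact Complex.ext hre0 him0
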